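/- (Cline's Lemma) Let A be an m×n matrix and B an n×m matrix over a field F. Then (AB)^D = A·((BA)^D)^2·B, and the Drazin indices satisfy |i(AB) − i(BA)| ≤ 1. -/
import Mathlib

open Matrix Polynomial

/-- The Drazin index of a square matrix: the smallest natural number `k`
such that `rank (A ^ k) = rank (A ^ (k+1))`. -/
noncomputable def drazinIndex {n : Type*} [Fintype n] [DecidableEq n]
    {F : Type*} [Field F] (A : Matrix n n F) : ℕ :=
  sInf {k : ℕ | (A ^ k).rank = (A ^ (k + 1)).rank}

/-- `X` is the Drazin inverse of `A`:
`A^(k+1) * X = A^k`, `X * A * X = X`, `A * X = X * A` with `k = drazinIndex A`. -/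
def IsDrazinInverse {n : Type*} [Fintype n] [DecidableEq n]
    {F : Type*} [Field F] (A X : Matrix n n F) : Prop :=
  A ^ (drazinIndex A + 1) * X = A ^ drazinIndex A ∧ X * A * X = X ∧ A * X = X * A

section ClineHelpers

variable {F : Type*} [Field F]

/-- `(A*B)^p * A = A * (B*A)^p` for rectangular matrices. -/
lemma rect_pow_mul {m n : ℕ} (A : Matrix (Fin m) (Fin n) F) (B : Matrix (Fin n) (Fin m) F)
    (p : ℕ) : (A * B) ^ p * A = A * (B * A) ^ p := by
  induction p with
  | zero => simp
  | succ p ih =>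
    calc (A * B) ^ (p + 1) * A = ((A * B) ^ p * A) * (B * A) := by
          rw [pow_succ]; simp only [Matrix.mul_assoc]
      _ = A * ((B * A) ^ p * (B * A)) := by rw [ih, Matrix.mul_assoc]
      _ = A * (B * A) ^ (p + 1) := by rw [← pow_succ]

/-- Uniqueness of Drazin-type inverses (with possibly different indices). -/
lemma drazin_unique {R : Type*} [Ring R] (M X W : R) {k j : ℕ}
    (h1 : M ^ (k + 1) * X = M ^ k) (h2 : X * M * X = X) (h3 : M * X = X * M)
    (h1' : M ^ (j + 1) * W = M ^ j) (h2' : W * M * W = W) (h3' : M * W = W * M) :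
    X = W := by
  have cX : Commute M X := h3
  have cW : Commute M W := h3'
  have hXp : ∀ p : ℕ, X = X ^ (p + 1) * M ^ p := by
    intro p
    induction p with
    | zero => simp
    | succ p ih =>
      have e1 : X ^ (p + 2) * M ^ (p + 1) = (X ^ (p + 1) * M ^ p) * (X * M) := by
        have hc := (cX.symm.pow_right p).eq  -- X * M ^ p = M ^ p * X
        calc X ^ (p + 2) * M ^ (p + 1)
            = X ^ (p + 1) * ((X * M ^ p) * M) := by rw [pow_succ X, pow_succ M]; noncomm_ring
          _ = X ^ (p + 1) * ((M ^ p * X) * M) := by rw [hc]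
          _ = (X ^ (p + 1) * M ^ p) * (X * M) := by noncomm_ring
      calc X = X * M * X := h2.symm
        _ = X * (X * M) := by rw [mul_assoc, h3]
        _ = (X ^ (p + 1) * M ^ p) * (X * M) := by rw [← ih]
        _ = X ^ (p + 2) * M ^ (p + 1) := e1.symm
  have hWp : ∀ p : ℕ, W = M ^ p * W ^ (p + 1) := by
    intro p
    induction p with
    | zero => simp
    | succ p ih =>
      have e1 : M ^ (p + 1) * W ^ (p + 2) = (M * W) * (M ^ p * W ^ (p + 1)) := by
        have hc := (cW.pow_left p).eq  -- M ^ p * W = W * M ^ p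
        calc M ^ (p + 1) * W ^ (p + 2)
            = M * ((M ^ p * W) * W ^ (p + 1)) := by
              rw [pow_succ' M, pow_succ' W]; noncomm_ring
          _ = M * ((W * M ^ p) * W ^ (p + 1)) := by rw [hc]
          _ = (M * W) * (M ^ p * W ^ (p + 1)) := by noncomm_ring
      calc W = W * M * W := h2'.symm
        _ = (M * W) * W := by rw [← h3']
        _ = (M * W) * (M ^ p * W ^ (p + 1)) := by rw [← ih]
        _ = M ^ (p + 1) * W ^ (p + 2) := e1.symm
  have hMX : ∀ p : ℕ, k ≤ p → M ^ (p + 1) * X = M ^ p := by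
    intro p hp
    obtain ⟨q, rfl⟩ := Nat.exists_eq_add_of_le hp
    have hq : k + q + 1 = q + (k + 1) := by omega
    calc M ^ (k + q + 1) * X = M ^ (q + (k + 1)) * X := by rw [hq]
      _ = M ^ q * (M ^ (k + 1) * X) := by rw [pow_add, mul_assoc]
      _ = M ^ q * M ^ k := by rw [h1]
      _ = M ^ (k + q) := by rw [← pow_add, add_comm]
  have hMW : ∀ p : ℕ, j ≤ p → M ^ (p + 1) * W = M ^ p := by
    intro p hp
    obtain ⟨q, rfl⟩ := Nat.exists_eq_add_of_le hp
    have hq : j + q + 1 = q + (j + 1) := by omega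
    calc M ^ (j + q + 1) * W = M ^ (q + (j + 1)) * W := by rw [hq]
      _ = M ^ q * (M ^ (j + 1) * W) := by rw [pow_add, mul_assoc]
      _ = M ^ q * M ^ j := by rw [h1']
      _ = M ^ (j + q) := by rw [← pow_add, add_comm]
  set p := max k j with hp
  have idXM : IsIdempotentElem (X * M) := by
    show X * M * (X * M) = X * M
    calc X * M * (X * M) = (X * M * X) * M := by noncomm_ring
      _ = X * M := by rw [h2]
  have idMW : IsIdempotentElem (M * W) := by
    show M * W * (M * W) = M * W
    calc M * W * (M * W) = M * (W * M * W) := by noncomm_ring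
      _ = M * W := by rw [h2']
  have keyX : X = X * M * W := by
    calc X = X ^ (p + 1) * M ^ p := hXp p
      _ = X ^ (p + 1) * (M ^ (p + 1) * W) := by rw [hMW p (le_max_right k j)]
      _ = (X ^ (p + 1) * M ^ (p + 1)) * W := by rw [mul_assoc]
      _ = (X * M) ^ (p + 1) * W := by rw [cX.symm.mul_pow]
      _ = X * M * W := by rw [idXM.pow_succ_eq p]
  have keyW : W = X * M * W := by
    have hMk : M ^ p = X * M ^ (p + 1) := by
      rw [← (cX.pow_left (p + 1)).eq, hMX p (le_max_left k j)]
    calc W = M ^ p * W ^ (p + 1) := hWp p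
      _ = X * M ^ (p + 1) * W ^ (p + 1) := by rw [hMk]
      _ = X * (M ^ (p + 1) * W ^ (p + 1)) := by rw [mul_assoc]
      _ = X * (M * W) ^ (p + 1) := by rw [cW.mul_pow]
      _ = X * (M * W) := by rw [idMW.pow_succ_eq p]
      _ = X * M * W := by rw [mul_assoc]
  rw [keyX, ← keyW]

/-- The candidate `A * Y² * B` satisfies the power equation for `A*B` at exponent `l+1`. -/
lemma cline_pow_eq {m n : ℕ} (A : Matrix (Fin m) (Fin n) F) (B : Matrix (Fin n) (Fin m) F)
    (Y : Matrix (Fin n) (Fin n) F) {l : ℕ}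
    (hY1 : (B * A) ^ (l + 1) * Y = (B * A) ^ l) :
    (A * B) ^ (l + 2) * (A * (Y * Y) * B) = (A * B) ^ (l + 1) := by
  have c3 : (B * A) ^ (l + 2) * (Y * Y) = (B * A) ^ l := by
    calc (B * A) ^ (l + 2) * (Y * Y)
        = (B * A) * ((B * A) ^ (l + 1) * Y) * Y := by
          rw [pow_succ' (B * A) (l + 1)]; noncomm_ring
      _ = ((B * A) * (B * A) ^ l) * Y := by rw [hY1]
      _ = (B * A) ^ (l + 1) * Y := by rw [← pow_succ']
      _ = (B * A) ^ l := hY1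
  calc (A * B) ^ (l + 2) * (A * (Y * Y) * B)
      = ((A * B) ^ (l + 2) * A) * ((Y * Y) * B) := by simp only [Matrix.mul_assoc]
    _ = A * ((B * A) ^ (l + 2) * (Y * Y)) * B := by
        rw [rect_pow_mul]; simp only [Matrix.mul_assoc]
    _ = A * (B * A) ^ l * B := by rw [c3]
    _ = ((A * B) ^ l * A) * B := by rw [rect_pow_mul]
    _ = (A * B) ^ (l + 1) := by rw [pow_succ, Matrix.mul_assoc]

/-- One-sided index inequality: `i(AB) ≤ i(BA) + 1`. -/
lemma cline_index_le {m n : ℕ} (A : Matrix (Fin m) (Fin n) F) (B : Matrix (Fin n) (Fin m) F)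
    (Y : Matrix (Fin n) (Fin n) F)
    (hY1 : (B * A) ^ (drazinIndex (B * A) + 1) * Y = (B * A) ^ drazinIndex (B * A)) :
    drazinIndex (A * B) ≤ drazinIndex (B * A) + 1 := by
  set l := drazinIndex (B * A)
  have hpow := cline_pow_eq A B Y hY1
  have h1 : ((A * B) ^ (l + 1)).rank ≤ ((A * B) ^ (l + 2)).rank := by
    rw [← hpow]; exact Matrix.rank_mul_le_left _ _
  have h2 : ((A * B) ^ (l + 2)).rank ≤ ((A * B) ^ (l + 1)).rank := by
    rw [pow_succ]; exact Matrix.rank_mul_le_left _ _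
  exact Nat.sInf_le (le_antisymm h1 h2)

end ClineHelpers

/-- Cline's Lemma: `(AB)^D = A ((BA)^D)^2 B` and `|i(AB) - i(BA)| ≤ 1`. -/
theorem cline_lemma {F : Type*} [Field F] {m n : ℕ}
    (A : Matrix (Fin m) (Fin n) F) (B : Matrix (Fin n) (Fin m) F)
    (X : Matrix (Fin m) (Fin m) F) (Y : Matrix (Fin n) (Fin n) F)
    (hX : IsDrazinInverse (A * B) X) (hY : IsDrazinInverse (B * A) Y) :
    X = A * (Y * Y) * B ∧
    |(drazinIndex (A * B) : ℤ) - (drazinIndex (B * A) : ℤ)| ≤ 1 := by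
  obtain ⟨hX1, hX2, hX3⟩ := hX
  obtain ⟨hY1, hY2, hY3⟩ := hY
  -- square-ring facts about Y and N := B*A
  have key1 : Y * Y * (B * A) = Y := by
    calc Y * Y * (B * A) = Y * ((B * A) * Y) := by rw [hY3]; noncomm_ring
      _ = Y * (B * A) * Y := by rw [← mul_assoc]
      _ = Y := hY2
  have key2 : (B * A) * (Y * Y) = Y := by
    calc (B * A) * (Y * Y) = ((B * A) * Y) * Y := by rw [← mul_assoc]
      _ = (Y * (B * A)) * Y := by rw [hY3]
      _ = Y := hY2
  have c2 : (Y * Y) * (B * A) * (B * A) * (Y * Y) = Y * Y := by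
    calc (Y * Y) * (B * A) * (B * A) * (Y * Y)
        = Y * ((B * A) * (Y * Y)) := by rw [key1]; noncomm_ring
      _ = Y * Y := by rw [key2]
  -- the candidate Drazin inverse of A*B
  have hW1 : (A * B) ^ (drazinIndex (B * A) + 1 + 1) * (A * (Y * Y) * B)
      = (A * B) ^ (drazinIndex (B * A) + 1) := cline_pow_eq A B Y hY1
  have hW2 : (A * (Y * Y) * B) * (A * B) * (A * (Y * Y) * B) = A * (Y * Y) * B := by
    calc (A * (Y * Y) * B) * (A * B) * (A * (Y * Y) * B)
        = A * ((Y * Y) * (B * A) * (B * A) * (Y * Y)) * B := by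
          simp only [Matrix.mul_assoc]
      _ = A * (Y * Y) * B := by rw [c2, Matrix.mul_assoc]
  have hW3 : (A * B) * (A * (Y * Y) * B) = (A * (Y * Y) * B) * (A * B) := by
    have cY2 : (B * A) * (Y * Y) = (Y * Y) * (B * A) := by
      calc (B * A) * (Y * Y) = (Y * (B * A)) * Y := by rw [← mul_assoc, hY3]
        _ = Y * ((B * A) * Y) := by rw [mul_assoc]
        _ = (Y * Y) * (B * A) := by rw [hY3]; noncomm_ring
    calc (A * B) * (A * (Y * Y) * B)
        = A * ((B * A) * (Y * Y)) * B := by simp only [Matrix.mul_assoc]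
      _ = A * ((Y * Y) * (B * A)) * B := by rw [cY2]
      _ = (A * (Y * Y) * B) * (A * B) := by simp only [Matrix.mul_assoc]
  have part1 : X = A * (Y * Y) * B :=
    drazin_unique (A * B) X (A * (Y * Y) * B) hX1 hX2 hX3 hW1 hW2 hW3
  refine ⟨part1, ?_⟩
  have hkl : drazinIndex (A * B) ≤ drazinIndex (B * A) + 1 := cline_index_le A B Y hY1
  have hlk : drazinIndex (B * A) ≤ drazinIndex (A * B) + 1 := cline_index_le B A X hX1
  rw [abs_le]
  omega
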